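/- If Q is the quasivariety generated by a finite set K of finite algebras and A is a Q-subdirectly irreducible algebra, then A embeds into some member of K (i.e., A ∈ IS(K)). -/

import Mathlib

/-- An algebraic signature: a type of operation symbols with arities. -/
structure Signature where
  ops : Type
  arity : ops → ℕ

/-- An algebra for a signature `S`. -/
structure Alg (S : Signature) where
  carrier : Type
  interp : ∀ o : S.ops, (Fin (S.arity o) → carrier) → carrier

/-- Terms over a set `X` of variables. -/
inductive Term (S : Signature) (X : Type) : Type where
  | var : X → Term S X
  | op : (o : S.ops) → (Fin (S.arity o) → Term S X) → Term S X

variable {S : Signature}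

/-- Evaluation of a term in an algebra under an assignment of variables. -/
def Term.eval {X : Type} (A : Alg S) (h : X → A.carrier) : Term S X → A.carrier
  | .var x => h x
  | .op o args => A.interp o (fun i => (args i).eval A h)

/-- Application of a substitution to a term. -/
def Term.subst (σ : ℕ → Term S ℕ) : Term S ℕ → Term S ℕ
  | .var x => σ x
  | .op o args => .op o (fun i => (args i).subst σ)

/-- Homomorphisms of algebras. -/
def IsHom (A B : Alg S) (f : A.carrier → B.carrier) : Prop :=
  ∀ (o : S.ops) (args : Fin (S.arity o) → A.carrier),
    f (A.interp o args) = B.interp o (fun i => f (args i))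

/-- Embeddings of algebras: injective homomorphisms. -/
def IsEmbedding (A B : Alg S) (f : A.carrier → B.carrier) : Prop :=
  IsHom A B f ∧ Function.Injective f

/-- `A` embeds into `B` (i.e. `A` is isomorphic to a subalgebra of `B`). -/
def Embeds (A B : Alg S) : Prop := ∃ f, IsEmbedding A B f

/-- Isomorphism of algebras. -/
def Iso (A B : Alg S) : Prop := ∃ f, IsHom A B f ∧ Function.Bijective f

/-- Product of a family of algebras. -/
def ProdAlg {I : Type} (F : I → Alg S) : Alg S where
  carrier := ∀ i, (F i).carrier
  interp o args i := (F i).interp o (fun j => args j i)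

/-- Binary product of algebras. -/
def Alg.prod (A B : Alg S) : Alg S where
  carrier := A.carrier × B.carrier
  interp o args := (A.interp o (fun i => (args i).1), B.interp o (fun i => (args i).2))

/-- `A` is a subdirect product of the family `F`: there is an embedding of `A`
into the product whose composition with each projection is surjective. -/
def IsSubdirectProduct (A : Alg S) {I : Type} (F : I → Alg S) : Prop :=
  ∃ f : A.carrier → (ProdAlg F).carrier,
    IsEmbedding A (ProdAlg F) f ∧ ∀ i, Function.Surjective (fun a => f a i)

/-- An equation: an ordered pair of terms. -/
abbrev Eqn (S : Signature) (X : Type) := Term S X × Term S X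

/-- An equation holds in an algebra. -/
def Alg.SatisfiesEqn {X : Type} (A : Alg S) (e : Eqn S X) : Prop :=
  ∀ h : X → A.carrier, e.1.eval A h = e.2.eval A h

/-- An equation is valid in a class of algebras. -/
def EqValid (K : Set (Alg S)) (e : Eqn S ℕ) : Prop := ∀ A ∈ K, A.SatisfiesEqn e

/-- A quasiequation: finitely many premises and one conclusion. -/
structure Quasieq (S : Signature) where
  prem : List (Eqn S ℕ)
  concl : Eqn S ℕ

/-- A quasiequation holds in an algebra. -/
def Alg.SatisfiesQ (A : Alg S) (q : Quasieq S) : Prop :=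
  ∀ h : ℕ → A.carrier,
    (∀ e ∈ q.prem, e.1.eval A h = e.2.eval A h) →
      q.concl.1.eval A h = q.concl.2.eval A h

/-- The quasivariety generated by `K`: the class axiomatized by all
quasiequations valid in `K`. -/
def QGen (K : Set (Alg S)) : Set (Alg S) :=
  { A | ∀ q : Quasieq S, (∀ B ∈ K, B.SatisfiesQ q) → A.SatisfiesQ q }

/-- The variety generated by `K`: the class axiomatized by all
equations valid in `K`. -/
def VGen (K : Set (Alg S)) : Set (Alg S) :=
  { A | ∀ e : Eqn S ℕ, (∀ B ∈ K, B.SatisfiesEqn e) → A.SatisfiesEqn e }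

/-- A quasivariety is a class axiomatizable by quasiequations. -/
def IsQuasivariety (Q : Set (Alg S)) : Prop := QGen Q = Q

/-- `A` is `Q`-subdirectly irreducible: `A ∈ Q` and for every `Q`-subdirect
representation of `A`, `A` is isomorphic to one of the components. -/
def QSubdirectlyIrreducible (Q : Set (Alg S)) (A : Alg S) : Prop :=
  A ∈ Q ∧ ∀ (I : Type) (F : I → Alg S), (∀ i, F i ∈ Q) →
    IsSubdirectProduct A F → ∃ i, Iso A (F i)

/-- A congruence on an algebra. -/
structure Cong (A : Alg S) where
  r : A.carrier → A.carrier → Prop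
  iseqv : Equivalence r
  compat : ∀ (o : S.ops) (a b : Fin (S.arity o) → A.carrier),
    (∀ i, r (a i) (b i)) → r (A.interp o a) (A.interp o b)

def Cong.setoid {A : Alg S} (θ : Cong A) : Setoid A.carrier := ⟨θ.r, θ.iseqv⟩

/-- Quotient algebra of `A` by a congruence `θ`. -/
noncomputable def QuotAlg (A : Alg S) (θ : Cong A) : Alg S where
  carrier := Quotient θ.setoid
  interp o args := Quotient.mk θ.setoid (A.interp o (fun i => (args i).out))

/-- The term algebra over variables `X`. -/
def TermAlg (S : Signature) (X : Type) : Alg S where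
  carrier := Term S X
  interp := Term.op

/-- The congruence of all identifications valid in `K` on the term algebra:
the intersection of all congruences whose quotient embeds into a member of `K`. -/
def freeCong (K : Set (Alg S)) (X : Type) : Cong (TermAlg S X) where
  r φ ψ := ∀ A ∈ K, ∀ h : X → A.carrier, φ.eval A h = ψ.eval A h
  iseqv := by
    constructor
    · intro φ A hA h; rfl
    · intro φ ψ H A hA h; exact (H A hA h).symm
    · intro a b c H1 H2 A hA h; exact (H1 A hA h).trans (H2 A hA h)
  compat := by
    intro o a b hab A hA h
    show Term.eval A h (Term.op o a) = Term.eval A h (Term.op o b)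
    simp only [Term.eval]
    congr 1
    funext i
    exact hab i A hA h

/-- The free algebra of `K` over variables `X`. -/
noncomputable def FreeAlg (K : Set (Alg S)) (X : Type) : Alg S :=
  QuotAlg (TermAlg S X) (freeCong K X)

/-- `σ` is a `K`-unifier of the finite set of equations `Γ`. -/
def Unifier (K : Set (Alg S)) (σ : ℕ → Term S ℕ) (Γ : List (Eqn S ℕ)) : Prop :=
  ∀ e ∈ Γ, EqValid K (e.1.subst σ, e.2.subst σ)

/-- `Γ` is `K`-unifiable. -/
def Unifiable (K : Set (Alg S)) (Γ : List (Eqn S ℕ)) : Prop := ∃ σ, Unifier K σ Γ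

/-- The quasiequation `Γ ⇒ e` is `K`-admissible: every `K`-unifier of the
premises unifies the conclusion. -/
def Admissible (K : Set (Alg S)) (Γ : List (Eqn S ℕ)) (e : Eqn S ℕ) : Prop :=
  ∀ σ, Unifier K σ Γ → EqValid K (e.1.subst σ, e.2.subst σ)

/-- The quasiequation `Γ ⇒ e` is valid in the class `K` (`Γ ⊨_K e`). -/
def Models (K : Set (Alg S)) (Γ : List (Eqn S ℕ)) (e : Eqn S ℕ) : Prop :=
  ∀ A ∈ K, ∀ h : ℕ → A.carrier,
    (∀ e' ∈ Γ, e'.1.eval A h = e'.2.eval A h) → e.1.eval A h = e.2.eval A h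

/-- `Γ` is satisfiable in the algebra `A`. -/
def SatIn (A : Alg S) (Γ : List (Eqn S ℕ)) : Prop :=
  ∃ h : ℕ → A.carrier, ∀ e ∈ Γ, e.1.eval A h = e.2.eval A h

lemma eval_hom {X : Type} {A B : Alg S} {f : A.carrier → B.carrier} (hf : IsHom A B f)
    (h : X → A.carrier) : ∀ t : Term S X, f (t.eval A h) = t.eval B (fun x => f (h x))
  | .var x => rfl
  | .op o args => by
      show f (A.interp o fun i => (args i).eval A h)
        = B.interp o fun i => (args i).eval B (fun x => f (h x))
      rw [hf]
      congr 1
      funext i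
      exact eval_hom hf h (args i)

abbrev KT (K : Set (Alg S)) := {B : Alg S // B ∈ K}
abbrev MT (K : Set (Alg S)) := Σ B : KT K, B.1.carrier

def getv {K : Set (Alg S)} (B : KT K) (m : MT K) (h : m.1 = B) : B.1.carrier :=
  h ▸ m.2

lemma getv_mk {K : Set (Alg S)} (B : KT K) (v : B.1.carrier) (h : (⟨B, v⟩ : MT K).1 = B) :
    getv B (⟨B, v⟩ : MT K) h = v := rfl

lemma mk_getv {K : Set (Alg S)} (B : KT K) (m : MT K) (h : m.1 = B) :
    m = ⟨B, getv B m h⟩ := by subst h; rfl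

noncomputable def mInterp {K : Set (Alg S)} (B : KT K) (o : S.ops)
    (args : Fin (S.arity o) → MT K) : Option (MT K) :=
  @dite _ (∀ i, (args i).1 = B) (Classical.dec _)
    (fun h => some ⟨B, B.1.interp o (fun i => getv B (args i) (h i))⟩)
    (fun _ => none)

def ZF {K : Set (Alg S)} (A : Alg S) (a b : A.carrier) (F : Set A.carrier) :
    Set (KT K × (A.carrier → MT K)) :=
  {z | (∀ x ∈ F, (z.2 x).1 = z.1) ∧
       (∀ (o : S.ops) (args : Fin (S.arity o) → A.carrier),
         (∀ i, args i ∈ F) → A.interp o args ∈ F →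
         some (z.2 (A.interp o args)) = mInterp z.1 o (fun i => z.2 (args i))) ∧
       (a ∈ F → b ∈ F → z.2 a ≠ z.2 b)}


lemma ZF_nonempty [Finite S.ops] {K : Set (Alg S)} {A : Alg S} (hAQ : A ∈ QGen K)
    {a b : A.carrier} (hab : a ≠ b) (F : Set A.carrier) (hF : F.Finite) :
    (ZF (K := K) A a b F).Nonempty := by
  classical
  set F' : Set A.carrier := insert a (insert b F) with hF'def
  have hFsub : F ⊆ F' := fun x hx => Or.inr (Or.inr hx)
  have haF : a ∈ F' := Set.mem_insert _ _
  have hbF : b ∈ F' := Or.inr (Set.mem_insert _ _)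
  have hF'fin : F'.Finite := (hF.insert b).insert a
  haveI := hF'fin.fintype
  set n := Fintype.card F' with hn
  set e : F' ≃ Fin n := Fintype.equivFin _ with he
  set code : F' → ℕ := fun x => (e x).val with hcode
  set dec : ℕ → A.carrier := fun k => if h : k < n then (e.symm ⟨k, h⟩ : A.carrier) else a
    with hdecdef
  have hdec : ∀ x : F', dec (code x) = x.val := by
    intro x
    have h : code x < n := (e x).isLt
    simp only [hdecdef, dif_pos h]
    rw [show (⟨code x, h⟩ : Fin n) = e x from rfl, Equiv.symm_apply_apply]
  set tvar : F' → Term S ℕ := fun x => Term.var (code x) with htvar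
  haveI : Fintype (Σ o : S.ops, (Fin (S.arity o) → F')) := Fintype.ofFinite _
  set eqOf : (Σ o : S.ops, (Fin (S.arity o) → F')) → Eqn S ℕ := fun d =>
    if h : A.interp d.1 (fun i => (d.2 i : A.carrier)) ∈ F' then
      (Term.op d.1 (fun i => tvar (d.2 i)), tvar ⟨_, h⟩)
    else (Term.var 0, Term.var 0) with heqOf
  set q : Quasieq S :=
    ⟨(Finset.univ : Finset (Σ o : S.ops, (Fin (S.arity o) → F'))).toList.map eqOf,
      (tvar ⟨a, haF⟩, tvar ⟨b, hbF⟩)⟩ with hq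
  have hAq : ¬ A.SatisfiesQ q := by
    intro hsat
    have hc := hsat dec ?_
    · simp only [hq, htvar, Term.eval] at hc
      rw [hdec ⟨a, haF⟩, hdec ⟨b, hbF⟩] at hc
      exact hab hc
    · intro eq heq
      obtain ⟨d, _, rfl⟩ := List.mem_map.mp heq
      by_cases h : A.interp d.1 (fun i => (d.2 i : A.carrier)) ∈ F'
      · simp only [heqOf, dif_pos h, htvar, Term.eval]
        rw [hdec ⟨_, h⟩]
        congr 1
        funext i
        exact hdec (d.2 i)
      · simp only [heqOf, dif_neg h]
  have hK : ¬ ∀ B ∈ K, B.SatisfiesQ q := fun h => hAq (hAQ q h)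
  push_neg at hK
  obtain ⟨B, hBK, hBq⟩ := hK
  rw [Alg.SatisfiesQ] at hBq
  push_neg at hBq
  obtain ⟨hb, hprem, hconcl⟩ := hBq
  set BT : KT K := ⟨B, hBK⟩ with hBT
  set g : A.carrier → MT K := fun x =>
    ⟨BT, if h : x ∈ F' then hb (code ⟨x, h⟩) else hb 0⟩ with hg
  refine ⟨(BT, g), fun x _ => rfl, ?_, ?_⟩
  · intro o args h1 h2
    have h1' : ∀ i, args i ∈ F' := fun i => hFsub (h1 i)
    have h2' : A.interp o args ∈ F' := hFsub h2
    have hd := hprem (eqOf ⟨o, fun i => ⟨args i, h1' i⟩⟩)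
      (List.mem_map_of_mem (f := eqOf) (Finset.mem_toList.mpr (Finset.mem_univ _)))
    rw [heqOf] at hd
    beta_reduce at hd
    rw [dif_pos (show A.interp o (fun i => ((⟨args i, h1' i⟩ : F') : A.carrier)) ∈ F'
      from h2')] at hd
    simp only [htvar, Term.eval] at hd
    rw [mInterp, dif_pos (fun i => (rfl : (g (args i)).1 = BT))]
    congr 1
    show g (A.interp o args)
      = ⟨BT, B.interp o fun i => getv BT (g (args i)) rfl⟩
    simp only [hg]
    rw [dif_pos h2']
    congr 1
    rw [← hd]
    congr 1
    funext i
    rw [getv_mk, dif_pos (h1' i)]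
  · intro _ _ hgab
    apply hconcl
    simp only [hg] at hgab
    have h2c' := eq_of_heq (Sigma.ext_iff.mp hgab).2
    rw [dif_pos haF, dif_pos hbF] at h2c'
    exact h2c'

lemma getv_eq {K : Set (Alg S)} (B : KT K) (m : MT K) (v : B.1.carrier) (p : m.1 = B)
    (h : m = ⟨B, v⟩) : getv B m p = v := by subst h; rfl

lemma separating [Finite S.ops] {K : Set (Alg S)} (hKfin : K.Finite)
    (hfin : ∀ A ∈ K, Finite A.carrier) {A : Alg S} (hAQ : A ∈ QGen K)
    {a b : A.carrier} (hab : a ≠ b) :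
    ∃ B ∈ K, ∃ h : A.carrier → B.carrier, IsHom A B h ∧ h a ≠ h b := by
  classical
  haveI : Finite (KT K) := hKfin.to_subtype
  haveI : ∀ B : KT K, Finite B.1.carrier := fun B => hfin B.1 B.2
  letI : TopologicalSpace (KT K) := ⊥
  haveI : DiscreteTopology (KT K) := ⟨rfl⟩
  letI : TopologicalSpace (MT K) := ⊥
  haveI : DiscreteTopology (MT K) := ⟨rfl⟩
  letI : TopologicalSpace (Option (MT K)) := ⊥
  haveI : DiscreteTopology (Option (MT K)) := ⟨rfl⟩
  have hdir : Directed (fun x1 x2 => x1 ⊇ x2)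
      (fun F : {F : Set A.carrier // F.Finite} => ZF (K := K) A a b F.1) := by
    intro F G
    refine ⟨⟨F.1 ∪ G.1, F.2.union G.2⟩, ?_, ?_⟩
    · rintro z ⟨hz1, hz2, hz3⟩
      exact ⟨fun x hx => hz1 x (Or.inl hx),
        fun o args h1 h2 => hz2 o args (fun i => Or.inl (h1 i)) (Or.inl h2),
        fun ha hb' => hz3 (Or.inl ha) (Or.inl hb')⟩
    · rintro z ⟨hz1, hz2, hz3⟩
      exact ⟨fun x hx => hz1 x (Or.inr hx),
        fun o args h1 h2 => hz2 o args (fun i => Or.inr (h1 i)) (Or.inr h2),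
        fun ha hb' => hz3 (Or.inr ha) (Or.inr hb')⟩
  have hne : ∀ F : {F : Set A.carrier // F.Finite}, (ZF (K := K) A a b F.1).Nonempty :=
    fun F => ZF_nonempty hAQ hab F.1 F.2
  have hcl : ∀ F : {F : Set A.carrier // F.Finite}, IsClosed (ZF (K := K) A a b F.1) := by
    intro F
    have hdecomp : ZF (K := K) A a b F.1 =
        (⋂ x ∈ F.1, {z : KT K × (A.carrier → MT K) | (z.2 x).1 = z.1}) ∩
        ((⋂ o, ⋂ args, ⋂ (_ : ∀ i, args i ∈ F.1), ⋂ (_ : A.interp o args ∈ F.1),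
           {z : KT K × (A.carrier → MT K) |
             some (z.2 (A.interp o args)) = mInterp z.1 o (fun i => z.2 (args i))}) ∩
         {z : KT K × (A.carrier → MT K) | a ∈ F.1 → b ∈ F.1 → z.2 a ≠ z.2 b}) := by
      ext z
      simp only [ZF, Set.mem_setOf_eq, Set.mem_inter_iff, Set.mem_iInter]
    rw [hdecomp]
    refine IsClosed.inter ?_ (IsClosed.inter ?_ ?_)
    · refine isClosed_biInter fun x _ => isClosed_eq ?_ continuous_fst
      exact continuous_of_discreteTopology.comp ((continuous_apply x).comp continuous_snd)
    · refine isClosed_iInter fun o => isClosed_iInter fun args =>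
        isClosed_iInter fun _ => isClosed_iInter fun _ => isClosed_eq ?_ ?_
      · exact (continuous_of_discreteTopology (f := fun m : MT K => some m)).comp
          ((continuous_apply _).comp continuous_snd)
      · have hc : Continuous (fun z : KT K × (A.carrier → MT K) =>
            ((z.1, fun i => z.2 (args i)) : KT K × (Fin (S.arity o) → MT K))) :=
          continuous_fst.prodMk
            (continuous_pi fun i => (continuous_apply (args i)).comp continuous_snd)
        exact (continuous_of_discreteTopology
          (f := fun p : KT K × (Fin (S.arity o) → MT K) => mInterp p.1 o p.2)).comp hc
    · by_cases haf : a ∈ F.1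
      · by_cases hbf : b ∈ F.1
        · have hset : {z : KT K × (A.carrier → MT K) | a ∈ F.1 → b ∈ F.1 → z.2 a ≠ z.2 b}
              = (fun z : KT K × (A.carrier → MT K) => (z.2 a, z.2 b)) ⁻¹'
                {p : MT K × MT K | p.1 ≠ p.2} := by
            ext z; simp [haf, hbf]
          rw [hset]
          exact (isClosed_discrete _).preimage
            (((continuous_apply a).comp continuous_snd).prodMk
              ((continuous_apply b).comp continuous_snd))
        · have hset : {z : KT K × (A.carrier → MT K) | a ∈ F.1 → b ∈ F.1 → z.2 a ≠ z.2 b}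
              = Set.univ := by ext z; simp [hbf]
          rw [hset]; exact isClosed_univ
      · have hset : {z : KT K × (A.carrier → MT K) | a ∈ F.1 → b ∈ F.1 → z.2 a ≠ z.2 b}
            = Set.univ := by ext z; simp [haf]
        rw [hset]; exact isClosed_univ
  haveI : Nonempty {F : Set A.carrier // F.Finite} := ⟨⟨∅, Set.finite_empty⟩⟩
  obtain ⟨z, hz⟩ := IsCompact.nonempty_iInter_of_directed_nonempty_isCompact_isClosed
    _ hdir hne (fun F => (hcl F).isCompact) hcl
  have hzF : ∀ F : {F : Set A.carrier // F.Finite}, z ∈ ZF (K := K) A a b F.1 :=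
    fun F => Set.mem_iInter.mp hz F
  have hcomp : ∀ x, (z.2 x).1 = z.1 :=
    fun x => (hzF ⟨{x}, Set.finite_singleton x⟩).1 x rfl
  refine ⟨z.1.1, z.1.2, fun x => getv z.1 (z.2 x) (hcomp x), ?_, ?_⟩
  · intro o args
    have hF : (Set.range args ∪ {A.interp o args}).Finite :=
      (Set.finite_range args).union (Set.finite_singleton _)
    have h2 := (hzF ⟨_, hF⟩).2.1 o args (fun i => Or.inl ⟨i, rfl⟩) (Or.inr rfl)
    rw [mInterp, dif_pos (fun i => hcomp (args i))] at h2
    have h3 := Option.some.inj h2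
    show getv z.1 (z.2 (A.interp o args)) (hcomp _)
      = (z.1 : Alg S).interp o fun i => getv z.1 (z.2 (args i)) (hcomp _)
    rw [getv_eq z.1 _ _ (hcomp _) h3]
  · intro hEq
    have h3 := (hzF ⟨{a, b}, (Set.finite_singleton b).insert a⟩).2.2
      (Set.mem_insert _ _) (Or.inr rfl)
    apply h3
    rw [mk_getv z.1 (z.2 a) (hcomp a), mk_getv z.1 (z.2 b) (hcomp b)]
    exact congrArg (Sigma.mk z.1) hEq

lemma mem_QGen_of_embeds {K : Set (Alg S)} {A B : Alg S} (hB : B ∈ QGen K)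
    (hemb : Embeds A B) : A ∈ QGen K := by
  obtain ⟨f, hf, hinj⟩ := hemb
  intro q hq h hprem
  apply hinj
  rw [eval_hom hf, eval_hom hf]
  exact hB q hq (fun x => f (h x))
    (fun e he => by rw [← eval_hom hf, ← eval_hom hf, hprem e he])

/-- The image of a homomorphism, as an algebra. -/
def ImgAlg (A B : Alg S) (h : A.carrier → B.carrier) (hh : IsHom A B h) : Alg S where
  carrier := {y : B.carrier // ∃ x, h x = y}
  interp o args := ⟨B.interp o (fun i => (args i).1), by
    choose x hx using fun i => (args i).2
    exact ⟨A.interp o x, by rw [hh]; congr 1; funext i; rw [hx i]⟩⟩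

lemma ImgAlg_embeds (A B : Alg S) (h : A.carrier → B.carrier) (hh : IsHom A B h) :
    Embeds (ImgAlg A B h hh) B :=
  ⟨Subtype.val, fun o args => rfl, fun x y hxy => Subtype.ext hxy⟩

theorem stmt2 {S : Signature} [Finite S.ops] (K : Set (Alg S)) (hKfin : K.Finite)
    (hfin : ∀ A ∈ K, Finite A.carrier) (A : Alg S)
    (hA : QSubdirectlyIrreducible (QGen K) A) :
    ∃ B ∈ K, Embeds A B := by
  classical
  by_cases htriv : ∀ a b : A.carrier, a = b
  · exfalso
    obtain ⟨i, -⟩ := hA.2 Empty (fun i => i.elim) (fun i => i.elim)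
      ⟨fun _ => fun i => i.elim,
        ⟨fun o args => funext fun i => i.elim, fun x y _ => htriv x y⟩,
        fun i => i.elim⟩
    exact i.elim
  · have hsep : ∀ p : {p : A.carrier × A.carrier // p.1 ≠ p.2},
        ∃ B ∈ K, ∃ h : A.carrier → B.carrier, IsHom A B h ∧ h p.1.1 ≠ h p.1.2 :=
      fun p => separating hKfin hfin hA.1 p.2
    choose Bf hBK hf hfhom hfsep using hsep
    let C : {p : A.carrier × A.carrier // p.1 ≠ p.2} → Alg S := fun i => ImgAlg A (Bf i) (hf i) (hfhom i)
    have hCQ : ∀ i, C i ∈ QGen K :=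
      fun i => mem_QGen_of_embeds (fun q hq => hq _ (hBK i)) (ImgAlg_embeds A (Bf i) _ _)
    have hsubdir : IsSubdirectProduct A C := by
      refine ⟨fun x => fun i => ⟨hf i x, x, rfl⟩, ⟨?_, ?_⟩, ?_⟩
      · intro o args
        funext i
        exact Subtype.ext (hfhom i o args)
      · intro x y hxy
        by_contra hne
        exact hfsep ⟨(x, y), hne⟩
          (congrArg Subtype.val (congrFun hxy ⟨(x, y), hne⟩))
      · rintro i ⟨y, x, hx⟩
        exact ⟨x, Subtype.ext hx⟩
    obtain ⟨i, g, hg, hgbij⟩ := hA.2 _ C hCQ hsubdir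
    refine ⟨Bf i, hBK i, fun x => (g x).1, ?_, ?_⟩
    · intro o args
      show (g (A.interp o args)).1 = (Bf i).interp o fun j => (g (args j)).1
      rw [hg o args]
      rfl
    · exact fun x y hxy => hgbij.injective (Subtype.ext hxy)
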